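/- Let F be a field of characteristic different from 2 and let K₃ be the three-dimensional Kaplansky superalgebra over F: the F-vector space with basis e, z, w and bilinear multiplication determined by e·e = e, e·z = z·e = (1/2)z, e·w = w·e = (1/2)w, z·w = e, w·z = −e, z·z = w·w = 0. If φ is a non-trivial δ-derivation of K₃ (i.e. a δ-derivation that is neither a derivation of K₃ nor a linear map vanishing on all products K₃·K₃), then δ = 1/2 and there exists α ∈ F such that φ(x) = α·x for all x ∈ K₃. Moreover, if δ ≠ 1/2 and δ ≠ 1, then every δ-derivation of K₃ is zero. -/
import Mathlib


/-- The multiplication of the three-dimensional Kaplansky superalgebra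
`K₃` in coordinates: `(a, b, c)` stands for `a·e + b·z + c·w`, with
`e·e = e`, `e·z = z·e = (1/2)z`, `e·w = w·e = (1/2)w`, `z·w = e`,
`w·z = −e`, `z·z = w·w = 0`. -/
def K3mul {F : Type*} [Field F] (x y : F × F × F) : F × F × F :=
  (x.1 * y.1 + x.2.1 * y.2.2 - x.2.2 * y.2.1,
   (1 / 2 : F) * (x.1 * y.2.1 + y.1 * x.2.1),
   (1 / 2 : F) * (x.1 * y.2.2 + y.1 * x.2.2))

private lemma cancel₀ {F : Type*} [Field F] {k v : F} (hk : k ≠ 0) (h : k * v = 0) : v = 0 :=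
  (mul_eq_zero.mp h).resolve_left hk

private lemma K3dec {F : Type*} [Field F] (φ : (F × F × F) →ₗ[F] (F × F × F)) (x : F × F × F) :
    φ x = x.1 • φ (1,0,0) + x.2.1 • φ (0,1,0) + x.2.2 • φ (0,0,1) := by
  rw [← map_smul, ← map_smul, ← map_smul, ← map_add, ← map_add]
  congr 1
  simp [Prod.ext_iff]

private lemma K3aux {F : Type*} [Field F] (hchar : (2 : F) ≠ 0)
    (δ : F) (φ : (F × F × F) →ₗ[F] (F × F × F))
    (hφ : ∀ x y : F × F × F, φ (K3mul x y) = δ • (K3mul (φ x) y + K3mul x (φ y))) :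
    (δ = 1/2 → ∃ α : F, ∀ x : F × F × F, φ x = α • x) ∧
    (δ ≠ 1/2 → δ ≠ 1 → φ = 0) := by
  obtain ⟨a1,a2,a3,ha⟩ : ∃ p q r, φ ((1:F),(0:F),(0:F)) = (p,q,r) := ⟨_,_,_,rfl⟩
  obtain ⟨b1,b2,b3,hb⟩ : ∃ p q r, φ ((0:F),(1:F),(0:F)) = (p,q,r) := ⟨_,_,_,rfl⟩
  obtain ⟨c1,c2,c3,hc⟩ : ∃ p q r, φ ((0:F),(0:F),(1:F)) = (p,q,r) := ⟨_,_,_,rfl⟩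
  have h1 := hφ (1,0,0) (1,0,0)
  rw [show K3mul ((1:F),(0:F),(0:F)) ((1:F),(0:F),(0:F)) = ((1:F),(0:F),(0:F)) from by
        norm_num [K3mul], ha] at h1
  have h2 := hφ (1,0,0) (0,1,0)
  rw [show K3mul ((1:F),(0:F),(0:F)) ((0:F),(1:F),(0:F)) = (2:F)⁻¹ • ((0:F),(1:F),(0:F)) from by
        norm_num [K3mul, Prod.smul_mk], map_smul, ha, hb] at h2
  have h3 := hφ (1,0,0) (0,0,1)
  rw [show K3mul ((1:F),(0:F),(0:F)) ((0:F),(0:F),(1:F)) = (2:F)⁻¹ • ((0:F),(0:F),(1:F)) from by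
        norm_num [K3mul, Prod.smul_mk], map_smul, ha, hc] at h3
  have h4 := hφ (0,1,0) (0,0,1)
  rw [show K3mul ((0:F),(1:F),(0:F)) ((0:F),(0:F),(1:F)) = ((1:F),(0:F),(0:F)) from by
        norm_num [K3mul], ha, hb, hc] at h4
  have h6 := hφ (0,1,0) (0,1,0)
  rw [show K3mul ((0:F),(1:F),(0:F)) ((0:F),(1:F),(0:F)) = (0 : F×F×F) from by
        norm_num [K3mul, Prod.ext_iff], map_zero, hb] at h6
  have h7 := hφ (0,0,1) (0,0,1)
  rw [show K3mul ((0:F),(0:F),(1:F)) ((0:F),(0:F),(1:F)) = (0 : F×F×F) from by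
        norm_num [K3mul, Prod.ext_iff], map_zero, hc] at h7
  simp only [K3mul, Prod.smul_mk, Prod.mk_add_mk, smul_eq_mul, Prod.mk.injEq] at h1 h2 h3 h4 h6 h7
  norm_num [Prod.ext_iff] at h1 h2 h3 h4 h6 h7
  obtain ⟨e11,e12,e13⟩ := h1
  obtain ⟨e21,e22,e23⟩ := h2
  obtain ⟨e31,e32,e33⟩ := h3
  obtain ⟨e41,e42,e43⟩ := h4
  field_simp at e11 e12 e13 e21 e22 e23 e31 e32 e33 e41 e42 e43 h6 h7
  constructor
  · -- δ = 1/2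
    intro hδ
    have hδ2 : δ * 2 = 1 := by rw [hδ]; exact div_mul_cancel₀ 1 hchar
    have hδ0 : δ ≠ 0 := by intro h; rw [h, zero_mul] at hδ2; exact one_ne_zero hδ2.symm
    have hb1 : b1 = 0 := cancel₀ hchar (by linear_combination (h6.resolve_left hδ0))
    have hc1 : c1 = 0 := cancel₀ hchar (by linear_combination (h7.resolve_left hδ0))
    have ha2 : a2 = 0 := by linear_combination e12 + a2 * hδ2
    have ha3 : a3 = 0 := by linear_combination e13 + a3 * hδ2
    have hb3 : b3 = 0 := by linear_combination 2*e23 + b3 * hδ2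
    have hc2 : c2 = 0 := by linear_combination 2*e32 + c2 * hδ2
    have hb2 : b2 = a1 := by linear_combination 2*e22 + (a1+b2)*hδ2
    have hc3 : c3 = a1 := by linear_combination 2*e33 + (a1+c3)*hδ2
    refine ⟨a1, fun x => ?_⟩
    rw [K3dec, ha, hb, hc, ha2, ha3, hb1, hb2, hb3, hc1, hc2, hc3]
    refine Prod.ext ?_ (Prod.ext ?_ ?_) <;> simp <;> ring
  · -- δ ≠ 1/2, δ ≠ 1  →  φ = 0
    intro hd2 hd1
    have hne2 : (1:F) - 2*δ ≠ 0 := by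
      intro h; apply hd2; rw [eq_div_iff hchar]; linear_combination -h
    have hne1 : (1:F) - δ ≠ 0 := sub_ne_zero.mpr (Ne.symm hd1)
    have ha1 : a1 = 0 := cancel₀ hne2 (by linear_combination e11)
    have ha2 : a2 = 0 := cancel₀ (mul_ne_zero hchar hne1) (by linear_combination e12)
    have ha3 : a3 = 0 := cancel₀ (mul_ne_zero hchar hne1) (by linear_combination e13)
    have hb3 : b3 = 0 := cancel₀ hne1 (by linear_combination e23)
    have hc2 : c2 = 0 := cancel₀ hne1 (by linear_combination e32)
    have hb2 : b2 = 0 := cancel₀ hne1 (by linear_combination e22 + δ * ha1)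
    have hc3 : c3 = 0 := cancel₀ hne1 (by linear_combination e33 + δ * ha1)
    have hb1 : b1 = 0 := cancel₀ hne2 (by linear_combination e21 - 2*δ*ha3)
    have hc1 : c1 = 0 := cancel₀ hne2 (by linear_combination e31 + 2*δ*ha2)
    apply LinearMap.ext
    intro x
    rw [K3dec, ha, hb, hc, ha1, ha2, ha3, hb1, hb2, hb3, hc1, hc2, hc3]
    simp

/-- **δ-derivations of the Kaplansky superalgebra `K₃`.**
Let `F` be a field of characteristic not `2`, `δ ∈ F` and `φ` a
`δ`-derivation of `K₃`.  If `φ` is non-trivial (neither a derivation nor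
vanishing on all products), then `δ = 1/2` and `φ x = α • x` for some
`α ∈ F`.  Moreover, if `δ ≠ 1/2` and `δ ≠ 1` then `φ = 0`. -/
theorem delta_derivation_of_K3
    {F : Type*} [Field F] (hchar : (2 : F) ≠ 0)
    (δ : F) (φ : (F × F × F) →ₗ[F] (F × F × F))
    (hφ : ∀ x y : F × F × F, φ (K3mul x y) = δ • (K3mul (φ x) y + K3mul x (φ y))) :
    ((¬ (∀ x y : F × F × F, φ (K3mul x y) = K3mul (φ x) y + K3mul x (φ y)) ∧
        ¬ (∀ x y : F × F × F, φ (K3mul x y) = 0)) →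
      δ = 1 / 2 ∧ ∃ α : F, ∀ x : F × F × F, φ x = α • x) ∧
    ((δ ≠ 1 / 2 ∧ δ ≠ 1) → φ = 0) := by
  have aux := K3aux hchar δ φ hφ
  refine ⟨?_, fun h => aux.2 h.1 h.2⟩
  rintro ⟨hnd, hnz⟩
  by_cases hδ : δ = 1/2
  · exact ⟨hδ, aux.1 hδ⟩
  · by_cases hδ1 : δ = 1
    · exact absurd (fun x y => by rw [hφ, hδ1, one_smul]) hnd
    · have h0 := aux.2 hδ hδ1
      exact absurd (fun x y => by rw [h0]; simp) hnz
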